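/- Let T > 0 and u ∈ W^{1,∞}((0,T),ℝ) with ‖u′‖_{L^∞(0,T)} ≤ 1/2, u₁(T)=0, u₂(T)=0, where u₁, u₂ are the first and second iterated primitives of u vanishing at 0. Then ∫₀ᵀ u₂(t)² dt + ∫₀ᵀ u₁(t)³ dt ≥ (1/2) ∫₀ᵀ u₂(t)² dt. -/

import Mathlib

open MeasureTheory intervalIntegral Set

theorem sussmann_quadratic_drift
    (T : ℝ) (hT : 0 < T) (u u' u1 u2 : ℝ → ℝ)
    (hderiv : ∀ t, HasDerivAt u (u' t) t)
    (hbdd : ∀ t ∈ Set.Icc (0:ℝ) T, |u' t| ≤ 1 / 2)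
    (hu1 : ∀ t, u1 t = ∫ s in (0:ℝ)..t, u s)
    (hu2 : ∀ t, u2 t = ∫ s in (0:ℝ)..t, u1 s)
    (h1T : u1 T = 0) (h2T : u2 T = 0) :
    (1 / 2) * ∫ t in (0:ℝ)..T, (u2 t) ^ 2 ≤
      (∫ t in (0:ℝ)..T, (u2 t) ^ 2) + ∫ t in (0:ℝ)..T, (u1 t) ^ 3 := by
  have hu_cont : Continuous u :=
    continuous_iff_continuousAt.2 fun t => (hderiv t).continuousAt
  have hu1d : ∀ t, HasDerivAt u1 (u t) t := by
    intro t
    have := (hu_cont.integral_hasStrictDerivAt 0 t).hasDerivAt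
    simpa [funext hu1] using this
  have hu1_cont : Continuous u1 :=
    continuous_iff_continuousAt.2 fun t => (hu1d t).continuousAt
  have hu2d : ∀ t, HasDerivAt u2 (u1 t) t := by
    intro t
    have := (hu1_cont.integral_hasStrictDerivAt 0 t).hasDerivAt
    simpa [funext hu2] using this
  have hu2_cont : Continuous u2 :=
    continuous_iff_continuousAt.2 fun t => (hu2d t).continuousAt
  -- H := u2 * u1^2 - u2^2 * u, H' = u1^3 - u2^2 * u'
  have hHd : ∀ t, HasDerivAt (fun t => u2 t * (u1 t) ^ 2 - (u2 t) ^ 2 * u t)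
      ((u1 t) ^ 3 - (u2 t) ^ 2 * u' t) t := by
    intro t
    have h1 := ((hu2d t).mul (((hu1d t)).pow 2))
    have h2 := (((hu2d t).pow 2).mul (hderiv t))
    have := h1.sub h2
    have hf : (fun t => u2 t * (u1 t) ^ 2 - (u2 t) ^ 2 * u t) = u2 * u1 ^ 2 - u2 ^ 2 * u := rfl
    rw [hf]
    refine this.congr_deriv ?_
    rw [Pi.pow_apply, Pi.pow_apply]
    ring
  -- measurability of u'
  have hu'_meas : Measurable u' := by
    have : u' = deriv u := funext fun t => ((hderiv t).deriv).symm
    rw [this]; exact measurable_deriv u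
  have h0 : u1 0 = 0 := by simp [hu1]
  have h0' : u2 0 = 0 := by simp [hu2]
  -- integrability of u' on [0,T]
  have hu'_int : IntervalIntegrable u' volume 0 T := by
    apply IntervalIntegrable.mono_fun'
      (g := fun _ : ℝ => (1 / 2 : ℝ)) intervalIntegrable_const
      hu'_meas.aestronglyMeasurable
    rw [Filter.EventuallyLE, ae_restrict_iff' measurableSet_uIoc]
    refine Filter.Eventually.of_forall fun t ht => ?_
    have : t ∈ Set.Icc (0:ℝ) T := by
      rcases ht with ht; rw [Set.uIoc_of_le hT.le] at ht
      exact ⟨ht.1.le, ht.2⟩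
    simpa [Real.norm_eq_abs] using hbdd t this
  have hint2 : IntervalIntegrable (fun t => (u2 t) ^ 2 * u' t) volume 0 T :=
    hu'_int.continuousOn_mul ((hu2_cont.pow 2).continuousOn)
  have hint1 : IntervalIntegrable (fun t => (u1 t) ^ 3) volume 0 T :=
    ((hu1_cont.pow 3).intervalIntegrable 0 T)
  have hftc : (∫ t in (0:ℝ)..T, ((u1 t) ^ 3 - (u2 t) ^ 2 * u' t)) =
      (u2 T * (u1 T) ^ 2 - (u2 T) ^ 2 * u T) - (u2 0 * (u1 0) ^ 2 - (u2 0) ^ 2 * u 0) :=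
    intervalIntegral.integral_eq_sub_of_hasDerivAt (fun t _ => hHd t) (hint1.sub hint2)
  have hzero : (∫ t in (0:ℝ)..T, ((u1 t) ^ 3 - (u2 t) ^ 2 * u' t)) = 0 := by
    rw [hftc, h1T, h2T, h0, h0']; ring
  have hsplit : (∫ t in (0:ℝ)..T, (u1 t) ^ 3) = ∫ t in (0:ℝ)..T, (u2 t) ^ 2 * u' t := by
    have := intervalIntegral.integral_sub hint1 hint2
    rw [this] at hzero
    linarith
  have hmono : (∫ t in (0:ℝ)..T, (-(1/2) * (u2 t) ^ 2)) ≤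
      ∫ t in (0:ℝ)..T, (u2 t) ^ 2 * u' t := by
    apply intervalIntegral.integral_mono_on hT.le
      ((continuous_const.mul (hu2_cont.pow 2)).intervalIntegrable 0 T) hint2
    intro t ht
    have hb := hbdd t ht
    have h1 : -(1/2 : ℝ) ≤ u' t := by
      have := abs_le.1 hb; linarith [this.1]
    simp only [Pi.mul_apply, Pi.pow_apply]
    nlinarith [sq_nonneg (u2 t)]
  have hconst : (∫ t in (0:ℝ)..T, (-(1/2) * (u2 t) ^ 2)) =
      -(1/2) * ∫ t in (0:ℝ)..T, (u2 t) ^ 2 := by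
    rw [intervalIntegral.integral_const_mul]
  rw [hsplit]
  rw [hconst] at hmono
  linarith
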